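/- Assume the locations are homogeneous: b_1 = ⋯ = b_J =: b and λ_1 = ⋯ = λ_J =: λ. Let θ : K → ℝ be nonnegative, satisfy the reduced balance equations, have total mass Σ_{k∈K} θ(k) = 1, and be permutation-symmetric: θ(k_{σ(1)},…,k_{σ(J)}) = θ(k_1,…,k_J) for every permutation σ of {1,…,J}. Then for every ℓ ∈ {1,…,b}: (Σ_{k∈K: k_1=ℓ} θ(k)) · λ = θ(ℓ−1, ℓ−1, …, ℓ−1) · ν/J + Σ_{i=1}^{J−1} (Σ_{k∈K: k_j=ℓ−1 for j=1,…,i and ℓ−1 < k_j ≤ b for j=i+1,…,J} θ(k)) · binom(J−1, i−1) · ν/i, where binom denotes the binomial coefficient. -/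

import Mathlib

open Finset

/-- `k + e_i`: add one unit in coordinate `i`. -/
def addE {J : ℕ} (k : Fin J → ℕ) (i : Fin J) : Fin J → ℕ :=
  Function.update k i (k i + 1)

/-- `k - e_i`: remove one unit in coordinate `i`. -/
def subE {J : ℕ} (k : Fin J → ℕ) (i : Fin J) : Fin J → ℕ :=
  Function.update k i (k i - 1)

/-- The set `M(k)` of locations attaining the maximal difference `b_i - k_i`. -/
def Mset {J : ℕ} (b k : Fin J → ℕ) : Finset (Fin J) :=
  Finset.univ.filter (fun i => b i - k i = Finset.univ.sup (fun j => b j - k j))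

/-- Routing probability `p_i(k)` (strict load balancing policy). -/
noncomputable def routeP {J : ℕ} (b k : Fin J → ℕ) (i : Fin J) : ℝ :=
  if i ∈ Mset b k then 1 / ((Mset b k).card : ℝ) else 0

/-- The inventory state space `K = {k : 0 ≤ k_j ≤ b_j}` as a `Finset`. -/
def Kfin {J : ℕ} (b : Fin J → ℕ) : Finset (Fin J → ℕ) :=
  Fintype.piFinset fun j => Finset.range (b j + 1)

/-- The reduced balance equation at a single state `k`. -/
def RBEat {J : ℕ} (lam : Fin J → ℝ) (b : Fin J → ℕ) (ν : ℝ)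
    (θ : (Fin J → ℕ) → ℝ) (k : Fin J → ℕ) : Prop :=
  θ k * ((∑ i ∈ Finset.univ.filter (fun i => 0 < k i), lam i)
      + ∑ i ∈ Finset.univ.filter (fun i => k i < b i), ν * routeP b k i)
    = (∑ i ∈ Finset.univ.filter (fun i => k i < b i), θ (addE k i) * lam i)
      + ∑ i ∈ Finset.univ.filter (fun i => 0 < k i),
          θ (subE k i) * ν * routeP b (subE k i) i

/-- `θ` satisfies the reduced balance equations (at every `k ∈ K`). -/
def ReducedBalance {J : ℕ} (lam : Fin J → ℝ) (b : Fin J → ℕ) (ν : ℝ)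
    (θ : (Fin J → ℕ) → ℝ) : Prop :=
  ∀ k : Fin J → ℕ, (∀ j, k j ≤ b j) → RBEat lam b ν θ k

/-- The global balance equation at a single state `(n, k)`. -/
def GBEat {J : ℕ} (lam : Fin J → ℝ) (b : Fin J → ℕ) (μ : Fin J → ℕ → ℝ) (ν : ℝ)
    (x : (Fin J → ℕ) → (Fin J → ℕ) → ℝ) (n k : Fin J → ℕ) : Prop :=
  x n k * ((∑ i ∈ Finset.univ.filter (fun i => 0 < k i), lam i)
      + (∑ i ∈ Finset.univ.filter (fun i => 0 < n i ∧ 0 < k i), μ i (n i))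
      + ∑ i ∈ Finset.univ.filter (fun i => k i < b i), ν * routeP b k i)
    = (∑ i ∈ Finset.univ.filter (fun i => 0 < n i ∧ 0 < k i), x (subE n i) k * lam i)
      + (∑ i ∈ Finset.univ.filter (fun i => k i < b i),
          x (addE n i) (addE k i) * μ i (n i + 1))
      + ∑ i ∈ Finset.univ.filter (fun i => 0 < k i),
          x n (subE k i) * ν * routeP b (subE k i) i

/-- `x` satisfies the global balance equations (at every `(n,k) ∈ ℕ^J × K`). -/
def GlobalBalance {J : ℕ} (lam : Fin J → ℝ) (b : Fin J → ℕ) (μ : Fin J → ℕ → ℝ)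
    (ν : ℝ) (x : (Fin J → ℕ) → (Fin J → ℕ) → ℝ) : Prop :=
  ∀ n k : Fin J → ℕ, (∀ j, k j ≤ b j) → GBEat lam b μ ν x n k

/-- `ξ̃_j(n) = ∏_{ℓ=1}^n λ_j / μ_j(ℓ)`. -/
noncomputable def xiT {J : ℕ} (lam : Fin J → ℝ) (μ : Fin J → ℕ → ℝ)
    (j : Fin J) (n : ℕ) : ℝ :=
  ∏ l ∈ Finset.Icc 1 n, lam j / μ j l

/-- `ξ̃(n) = ∏_j ξ̃_j(n_j)`. -/
noncomputable def xiTvec {J : ℕ} (lam : Fin J → ℝ) (μ : Fin J → ℕ → ℝ)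
    (n : Fin J → ℕ) : ℝ :=
  ∏ j, xiT lam μ j (n j)

/-- The transition rates `q_red` of the reduced (inventory-replenishment) process. -/
noncomputable def qred {J : ℕ} (lam : Fin J → ℝ) (b : Fin J → ℕ) (ν : ℝ)
    (k k' : Fin J → ℕ) : ℝ :=
  (∑ i : Fin J, (if 0 < k i ∧ k' = subE k i then lam i else 0))
    + ∑ i : Fin J, (if k i < b i ∧ k' = addE k i then ν * routeP b k i else 0)

/-- The candidate stationary measure for base stock levels all equal to one. -/
noncomputable def thetaOne {J : ℕ} (lam : Fin J → ℝ) (ν : ℝ)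
    (k : Fin J → ℕ) : ℝ :=
  (∏ l ∈ Finset.range (∑ j, k j), 1 / ((J : ℝ) - (l : ℝ)))
    * (∏ j, (1 / lam j) ^ (k j)) * (1 / ν) ^ (J - ∑ j, k j)

section Aux
variable {J : ℕ}

lemma mem_Kfin {b : Fin J → ℕ} {k : Fin J → ℕ} : k ∈ Kfin b ↔ ∀ j, k j ≤ b j := by
  simp [Kfin, Fintype.mem_piFinset, Nat.lt_succ_iff]

lemma addE_apply (k : Fin J → ℕ) (i j : Fin J) :
    addE k i j = if j = i then k i + 1 else k j := by
  simp [addE, Function.update_apply]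

lemma subE_apply (k : Fin J → ℕ) (i j : Fin J) :
    subE k i j = if j = i then k i - 1 else k j := by
  simp [subE, Function.update_apply]

lemma subE_addE (k : Fin J → ℕ) (i : Fin J) : subE (addE k i) i = k := by
  funext j
  rcases eq_or_ne j i with hj | hj
  · subst hj; simp [subE_apply, addE_apply]
  · simp [subE_apply, addE_apply, hj]

lemma addE_subE {k : Fin J → ℕ} {i : Fin J} (h : 0 < k i) : addE (subE k i) i = k := by
  funext j
  rcases eq_or_ne j i with hj | hj
  · subst hj; simp [addE_apply, subE_apply]; omega
  · simp [subE_apply, addE_apply, hj]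

end Aux

lemma cut_lemma {J : ℕ} (lamv : ℝ) (bv : ℕ) (ν : ℝ)
    (θ : (Fin J → ℕ) → ℝ)
    (hbal : ReducedBalance (fun _ => lamv) (fun _ => bv) ν θ)
    (i0 : Fin J) (ℓ : ℕ) (hl1 : 1 ≤ ℓ) (hlb : ℓ ≤ bv) :
    ∑ k ∈ (Kfin (fun _ : Fin J => bv)).filter (fun k => k i0 = ℓ), θ k * lamv
      = ∑ k ∈ (Kfin (fun _ : Fin J => bv)).filter (fun k => k i0 = ℓ - 1),
          θ k * (ν * routeP (fun _ => bv) k i0) := by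
  classical
  set b : Fin J → ℕ := fun _ => bv with hbdef
  set K := Kfin b with hKdef
  set A := K.filter (fun k => ℓ ≤ k i0) with hA
  have hKmem : ∀ {k : Fin J → ℕ}, k ∈ K ↔ ∀ j, k j ≤ bv := fun {k} => mem_Kfin
  have haddK : ∀ {k : Fin J → ℕ} {i : Fin J}, k ∈ K → k i < bv → addE k i ∈ K := by
    intro k i hk hi
    rw [hKmem] at hk ⊢
    intro j; rw [addE_apply]; split
    · omega
    · exact hk j
  have hsubK : ∀ {k : Fin J → ℕ} {i : Fin J}, k ∈ K → subE k i ∈ K := by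
    intro k i hk
    rw [hKmem] at hk ⊢
    intro j; rw [subE_apply]; split
    · have := hk i; omega
    · exact hk j
  -- summed balance equations over A
  have hsum : ∑ k ∈ A, θ k * ((∑ i ∈ univ.filter (fun i => 0 < k i), lamv)
        + ∑ i ∈ univ.filter (fun i => k i < bv), ν * routeP b k i)
      = ∑ k ∈ A, ((∑ i ∈ univ.filter (fun i => k i < bv), θ (addE k i) * lamv)
        + ∑ i ∈ univ.filter (fun i => 0 < k i),
            θ (subE k i) * (ν * routeP b (subE k i) i)) := by
    refine Finset.sum_congr rfl fun k hk => ?_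
    have h := hbal k (hKmem.mp (Finset.mem_filter.mp hk).1)
    simpa [RBEat, mul_assoc] using h
  simp only [mul_add, Finset.mul_sum, Finset.sum_add_distrib] at hsum
  -- reindex the arrival inflow term
  have hT1 : (∑ k ∈ A, ∑ i ∈ univ.filter (fun i => k i < bv), θ (addE k i) * lamv)
      = ∑ k ∈ A, ∑ i ∈ univ.filter (fun i => 0 < k i ∧ subE k i ∈ A), θ k * lamv := by
    rw [Finset.sum_sigma', Finset.sum_sigma']
    refine Finset.sum_nbij' (fun p => ⟨addE p.1 p.2, p.2⟩) (fun p => ⟨subE p.1 p.2, p.2⟩)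
      ?_ ?_ ?_ ?_ ?_
    · rintro ⟨k, i⟩ hp
      simp only [Finset.mem_sigma, Finset.mem_filter, Finset.mem_univ, true_and] at hp ⊢
      obtain ⟨hkA, hi⟩ := hp
      have hkK := (Finset.mem_filter.mp hkA).1
      have hkl := (Finset.mem_filter.mp hkA).2
      refine ⟨Finset.mem_filter.mpr ⟨haddK hkK hi, ?_⟩, ?_, ?_⟩
      · rcases eq_or_ne i0 i with h | h
        · rw [addE_apply, if_pos h, ← h]; omega
        · rw [addE_apply, if_neg h]; exact hkl
      · rw [addE_apply, if_pos rfl]; omega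
      · rw [subE_addE]; exact hkA
    · rintro ⟨k, i⟩ hp
      simp only [Finset.mem_sigma, Finset.mem_filter, Finset.mem_univ, true_and] at hp ⊢
      obtain ⟨hkA, hpos, hsub⟩ := hp
      have hkK := (Finset.mem_filter.mp hkA).1
      have hb' : ∀ j, k j ≤ bv := hKmem.mp hkK
      refine ⟨hsub, ?_⟩
      rw [subE_apply, if_pos rfl]
      have := hb' i; omega
    · rintro ⟨k, i⟩ _
      simp [subE_addE]
    · rintro ⟨k, i⟩ hp
      simp only [Finset.mem_sigma, Finset.mem_filter, Finset.mem_univ, true_and] at hp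
      simp [addE_subE hp.2.1]
    · rintro ⟨k, i⟩ _
      rfl
  -- split the arrival outflow term
  have hL1 : (∑ k ∈ A, ∑ i ∈ univ.filter (fun i => 0 < k i), θ k * lamv)
      = (∑ k ∈ A, ∑ i ∈ univ.filter (fun i => 0 < k i ∧ subE k i ∈ A), θ k * lamv)
        + ∑ k ∈ A, ∑ i ∈ univ.filter (fun i => 0 < k i ∧ subE k i ∉ A), θ k * lamv := by
    rw [← Finset.sum_add_distrib]
    refine Finset.sum_congr rfl fun k hk => ?_
    rw [← Finset.sum_filter_add_sum_filter_not (univ.filter fun i => 0 < k i)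
      (fun i => subE k i ∈ A)]
    congr 1 <;> rw [Finset.filter_filter]
  -- the down boundary term
  have hBd : (∑ k ∈ A, ∑ i ∈ univ.filter (fun i => 0 < k i ∧ subE k i ∉ A), θ k * lamv)
      = ∑ k ∈ K.filter (fun k => k i0 = ℓ), θ k * lamv := by
    have hset : ∀ k ∈ A, (univ.filter fun i => 0 < k i ∧ subE k i ∉ A)
        = if k i0 = ℓ then {i0} else ∅ := by
      intro k hk
      have hkK := (Finset.mem_filter.mp hk).1
      have hkl := (Finset.mem_filter.mp hk).2
      have hb' : ∀ j, k j ≤ bv := hKmem.mp hkK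
      ext i
      have hmemA : subE k i ∈ A ↔ ℓ ≤ subE k i i0 :=
        ⟨fun h => (Finset.mem_filter.mp h).2,
         fun h => Finset.mem_filter.mpr ⟨hsubK hkK, h⟩⟩
      simp only [Finset.mem_filter, Finset.mem_univ, true_and, hmemA]
      rcases eq_or_ne i i0 with rfl | hi
      · rw [subE_apply, if_pos rfl]
        by_cases hke : k i = ℓ
        · rw [if_pos hke]
          simp only [Finset.mem_singleton]
          constructor
          · intro _; trivial
          · intro _; constructor <;> omega
        · rw [if_neg hke]
          simp only [Finset.notMem_empty, iff_false]
          rintro ⟨h1, h2⟩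
          omega
      · have hv : subE k i i0 = k i0 := by rw [subE_apply, if_neg (Ne.symm hi)]
        rw [hv]
        split
        · simp only [Finset.mem_singleton]
          constructor
          · rintro ⟨-, h2⟩; exact absurd hkl h2
          · intro h; exact absurd h hi
        · simp only [Finset.notMem_empty, iff_false]
          rintro ⟨-, h2⟩; exact h2 hkl
    calc (∑ k ∈ A, ∑ i ∈ univ.filter (fun i => 0 < k i ∧ subE k i ∉ A), θ k * lamv)
        = ∑ k ∈ A, (if k i0 = ℓ then θ k * lamv else 0) := by
          refine Finset.sum_congr rfl fun k hk => ?_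
          rw [hset k hk]
          split <;> simp
      _ = ∑ k ∈ A.filter (fun k => k i0 = ℓ), θ k * lamv := (Finset.sum_filter _ _).symm
      _ = ∑ k ∈ K.filter (fun k => k i0 = ℓ), θ k * lamv := by
          congr 1
          rw [hA, Finset.filter_filter]
          apply Finset.filter_congr
          intro k _
          constructor
          · rintro ⟨-, h⟩; exact h
          · intro h; exact ⟨by omega, h⟩
  -- reindex the replenishment inflow term
  have hT2 : (∑ k ∈ A, ∑ i ∈ univ.filter (fun i => 0 < k i),
        θ (subE k i) * (ν * routeP b (subE k i) i))
      = ∑ k ∈ K, ∑ i ∈ univ.filter (fun i => k i < bv ∧ addE k i ∈ A),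
          θ k * (ν * routeP b k i) := by
    rw [Finset.sum_sigma', Finset.sum_sigma']
    refine Finset.sum_nbij' (fun p => ⟨subE p.1 p.2, p.2⟩) (fun p => ⟨addE p.1 p.2, p.2⟩)
      ?_ ?_ ?_ ?_ ?_
    · rintro ⟨k, i⟩ hp
      simp only [Finset.mem_sigma, Finset.mem_filter, Finset.mem_univ, true_and] at hp ⊢
      obtain ⟨hkA, hpos⟩ := hp
      have hkK := (Finset.mem_filter.mp hkA).1
      have hb' : ∀ j, k j ≤ bv := hKmem.mp hkK
      refine ⟨hsubK hkK, ?_, ?_⟩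
      · rw [subE_apply, if_pos rfl]; have := hb' i; omega
      · rw [addE_subE hpos]; exact hkA
    · rintro ⟨k, i⟩ hp
      simp only [Finset.mem_sigma, Finset.mem_filter, Finset.mem_univ, true_and] at hp ⊢
      obtain ⟨hkK, hi, hadd⟩ := hp
      refine ⟨hadd, ?_⟩
      rw [addE_apply, if_pos rfl]; omega
    · rintro ⟨k, i⟩ hp
      simp only [Finset.mem_sigma, Finset.mem_filter, Finset.mem_univ, true_and] at hp
      simp [addE_subE hp.2]
    · rintro ⟨k, i⟩ _
      simp [subE_addE]
    · rintro ⟨k, i⟩ _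
      rfl
  -- split the replenishment inflow over A vs boundary
  have hT2split : (∑ k ∈ K, ∑ i ∈ univ.filter (fun i => k i < bv ∧ addE k i ∈ A),
        θ k * (ν * routeP b k i))
      = (∑ k ∈ A, ∑ i ∈ univ.filter (fun i => k i < bv), θ k * (ν * routeP b k i))
        + ∑ k ∈ K.filter (fun k => k i0 = ℓ - 1), θ k * (ν * routeP b k i0) := by
    rw [← Finset.sum_filter_add_sum_filter_not K (fun k => ℓ ≤ k i0)
      (fun k => ∑ i ∈ univ.filter (fun i => k i < bv ∧ addE k i ∈ A),
        θ k * (ν * routeP b k i))]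
    congr 1
    · refine Finset.sum_congr rfl fun k hk => ?_
      have hkK := (Finset.mem_filter.mp hk).1
      have hkl := (Finset.mem_filter.mp hk).2
      refine Finset.sum_congr ?_ fun _ _ => rfl
      ext i
      simp only [Finset.mem_filter, Finset.mem_univ, true_and, and_iff_left_iff_imp]
      intro hi
      refine Finset.mem_filter.mpr ⟨haddK hkK hi, ?_⟩
      rcases eq_or_ne i0 i with h | h
      · rw [addE_apply, if_pos h, ← h]; omega
      · rw [addE_apply, if_neg h]; exact hkl
    · have hset : ∀ k ∈ K.filter (fun k => ¬ ℓ ≤ k i0),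
          (univ.filter fun i => k i < bv ∧ addE k i ∈ A)
            = if k i0 = ℓ - 1 then {i0} else ∅ := by
        intro k hk
        have hkK := (Finset.mem_filter.mp hk).1
        have hkl := (Finset.mem_filter.mp hk).2
        have hb' : ∀ j, k j ≤ bv := hKmem.mp hkK
        ext i
        simp only [Finset.mem_filter, Finset.mem_univ, true_and]
        have hmemA : ∀ (hi : k i < bv), (addE k i ∈ A ↔ ℓ ≤ addE k i i0) := fun hi =>
          ⟨fun h => (Finset.mem_filter.mp h).2,
           fun h => Finset.mem_filter.mpr ⟨haddK hkK hi, h⟩⟩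
        rcases eq_or_ne i i0 with rfl | hi
        · by_cases hke : k i = ℓ - 1
          · rw [if_pos hke]
            simp only [Finset.mem_singleton]
            constructor
            · intro _; trivial
            · intro _
              have hib : k i < bv := by omega
              refine ⟨hib, (hmemA hib).mpr ?_⟩
              rw [addE_apply, if_pos rfl]; omega
          · rw [if_neg hke]
            simp only [Finset.notMem_empty, iff_false]
            rintro ⟨h1, h2⟩
            rw [hmemA h1, addE_apply, if_pos rfl] at h2
            omega
        · have hfalse : ¬ (k i < bv ∧ addE k i ∈ A) := by
            rintro ⟨h1, h2⟩
            rw [hmemA h1, addE_apply, if_neg (Ne.symm hi)] at h2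
            exact hkl h2
          constructor
          · intro h; exact absurd h hfalse
          · intro h
            split at h
            · exact absurd (Finset.mem_singleton.mp h) hi
            · exact absurd h (Finset.notMem_empty i)
      calc (∑ k ∈ K.filter (fun k => ¬ ℓ ≤ k i0),
            ∑ i ∈ univ.filter (fun i => k i < bv ∧ addE k i ∈ A), θ k * (ν * routeP b k i))
          = ∑ k ∈ K.filter (fun k => ¬ ℓ ≤ k i0),
              (if k i0 = ℓ - 1 then θ k * (ν * routeP b k i0) else 0) := by
            refine Finset.sum_congr rfl fun k hk => ?_
            rw [hset k hk]
            split <;> simp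
        _ = ∑ k ∈ (K.filter (fun k => ¬ ℓ ≤ k i0)).filter (fun k => k i0 = ℓ - 1),
              θ k * (ν * routeP b k i0) := (Finset.sum_filter _ _).symm
        _ = ∑ k ∈ K.filter (fun k => k i0 = ℓ - 1), θ k * (ν * routeP b k i0) := by
            congr 1
            rw [Finset.filter_filter]
            apply Finset.filter_congr
            intro k _
            constructor
            · rintro ⟨-, h⟩; exact h
            · intro h; exact ⟨by omega, h⟩
  linarith [hsum, hT1, hL1, hBd, hT2, hT2split]

noncomputable def permBetween {α : Type*} [Fintype α] [DecidableEq α] {S T : Finset α}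
    (h : S.card = T.card) : Equiv.Perm α :=
  (Equiv.sumCompl (· ∈ T)).symm.trans
    (((Fintype.equivOfCardEq (by simp [h]) : {x // x ∈ T} ≃ {x // x ∈ S}).sumCongr
        (Fintype.equivOfCardEq (by simp [Fintype.card_subtype_compl, h]) :
          {x // ¬ x ∈ T} ≃ {x // ¬ x ∈ S})).trans
      (Equiv.sumCompl (· ∈ S)))

lemma permBetween_mem {α : Type*} [Fintype α] [DecidableEq α] {S T : Finset α}
    (h : S.card = T.card) (x : α) : permBetween h x ∈ S ↔ x ∈ T := by
  by_cases hx : x ∈ T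
  · simp only [permBetween, Equiv.trans_apply]
    rw [Equiv.sumCompl_symm_apply_of_pos hx]
    simp [hx]
  · simp only [permBetween, Equiv.trans_apply]
    rw [Equiv.sumCompl_symm_apply_of_neg hx]
    simp [hx]
    exact fun h' => ((Fintype.equivOfCardEq (by simp [Fintype.card_subtype_compl, h]) :
      {x // ¬ x ∈ T} ≃ {x // ¬ x ∈ S}) ⟨x, hx⟩).2 h'

lemma mem_Mset_iff {J : ℕ} {bv : ℕ} {k : Fin J → ℕ} (hk : ∀ j, k j ≤ bv) (i : Fin J) :
    i ∈ Mset (fun _ => bv) k ↔ ∀ j, k i ≤ k j := by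
  have hle := Finset.le_sup (f := fun j => bv - k j) (Finset.mem_univ i)
  simp only [Mset, Finset.mem_filter, Finset.mem_univ, true_and]
  constructor
  · intro h j
    have h2 := Finset.le_sup (f := fun j => bv - k j) (Finset.mem_univ j)
    rw [← h] at h2
    have h3 : bv - k j ≤ bv - k i := h2
    have := hk j; have := hk i; omega
  · intro h
    refine le_antisymm hle (Finset.sup_le fun j _ => ?_)
    show bv - k j ≤ bv - k i
    have := hk j; have := hk i; have := h j; omega

lemma Mset_eq_min {J : ℕ} {bv : ℕ} {k : Fin J → ℕ} (hk : ∀ j, k j ≤ bv) {i : Fin J}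
    (hmin : ∀ j, k i ≤ k j) :
    Mset (fun _ => bv) k = Finset.univ.filter (fun j => k j = k i) := by
  ext j
  rw [mem_Mset_iff hk, Finset.mem_filter]
  constructor
  · intro h; exact ⟨Finset.mem_univ j, le_antisymm (h i) (hmin j)⟩
  · intro h j'; rw [h.2]; exact hmin j'

/-- the canonical block of states: `= c` exactly on `S`, `> c` off `S`. -/
def blockSet {J : ℕ} (bv c : ℕ) (S : Finset (Fin J)) : Finset (Fin J → ℕ) :=
  (Kfin (fun _ => bv)).filter (fun k => ∀ j, (j ∈ S → k j = c) ∧ (j ∉ S → c < k j))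

lemma blockSum_eq {J : ℕ} (bv c : ℕ) (θ : (Fin J → ℕ) → ℝ)
    (hsym : ∀ (σ : Equiv.Perm (Fin J)) (k : Fin J → ℕ), θ (fun j => k (σ j)) = θ k)
    {S T : Finset (Fin J)} (h : S.card = T.card) :
    ∑ k ∈ blockSet bv c S, θ k = ∑ k ∈ blockSet bv c T, θ k := by
  classical
  set σ := permBetween h with hσ
  have key : ∀ j, σ.symm j ∈ T ↔ j ∈ S := fun j => by
    rw [← permBetween_mem h (σ.symm j)]
    rw [show permBetween h (σ.symm j) = σ (σ.symm j) from rfl, Equiv.apply_symm_apply]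
  refine Finset.sum_nbij' (fun k => fun j => k (σ j)) (fun k => fun j => k (σ.symm j))
    ?_ ?_ ?_ ?_ ?_
  · intro k hk
    simp only [blockSet, Finset.mem_filter] at hk ⊢
    obtain ⟨hkK, hall⟩ := hk
    refine ⟨mem_Kfin.mpr fun j => mem_Kfin.mp hkK (σ j), fun j => ⟨?_, ?_⟩⟩
    · intro hj
      exact (hall (σ j)).1 ((permBetween_mem h j).mpr hj)
    · intro hj
      exact (hall (σ j)).2 (fun hS => hj ((permBetween_mem h j).mp hS))
  · intro k hk
    simp only [blockSet, Finset.mem_filter] at hk ⊢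
    obtain ⟨hkK, hall⟩ := hk
    refine ⟨mem_Kfin.mpr fun j => mem_Kfin.mp hkK (σ.symm j), fun j => ⟨?_, ?_⟩⟩
    · intro hj
      exact (hall (σ.symm j)).1 ((key j).mpr hj)
    · intro hj
      exact (hall (σ.symm j)).2 (fun hT => hj ((key j).mp hT))
  · intro k _
    funext j
    simp
  · intro k _
    funext j
    simp
  · intro k _
    exact (hsym σ k).symm

lemma card_filter_lt {J : ℕ} {i : ℕ} (hi : i ≤ J) :
    ((univ : Finset (Fin J)).filter (fun j : Fin J => (j : ℕ) < i)).card = i := by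
  induction i with
  | zero => simp
  | succ n ih =>
    have hn : n ≤ J := by omega
    have hins : ((univ : Finset (Fin J)).filter (fun j : Fin J => (j : ℕ) < n + 1))
        = insert (⟨n, by omega⟩ : Fin J) (univ.filter (fun j : Fin J => (j : ℕ) < n)) := by
      ext j
      simp only [Finset.mem_filter, Finset.mem_univ, true_and, Finset.mem_insert, Fin.ext_iff]
      omega
    rw [hins, Finset.card_insert_of_notMem (by simp), ih hn]

lemma card_sets {J : ℕ} (i0 : Fin J) {i : ℕ} (hi : 1 ≤ i) :
    (((univ : Finset (Finset (Fin J))).filter (fun S => i0 ∈ S)).filter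
        (fun S => S.card = i)).card = (J - 1).choose (i - 1) := by
  classical
  have h1 : (((univ : Finset (Finset (Fin J))).filter (fun S => i0 ∈ S)).filter
        (fun S => S.card = i)).card = ((univ.erase i0).powersetCard (i - 1)).card := by
    apply Finset.card_nbij' (fun S => S.erase i0) (fun T => insert i0 T)
    · intro S hS
      simp only [Finset.mem_coe, Finset.mem_filter, Finset.mem_univ, true_and] at hS
      rw [Finset.mem_coe, Finset.mem_powersetCard]
      exact ⟨Finset.erase_subset_erase _ (Finset.subset_univ S),
        by rw [Finset.card_erase_of_mem hS.1, hS.2]⟩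
    · intro T hT
      rw [Finset.mem_coe, Finset.mem_powersetCard] at hT
      have hi0 : i0 ∉ T := fun h => (Finset.mem_erase.mp (hT.1 h)).1 rfl
      simp only [Finset.mem_coe, Finset.mem_filter, Finset.mem_univ, true_and]
      exact ⟨Finset.mem_insert_self _ _,
        by rw [Finset.card_insert_of_notMem hi0, hT.2]; omega⟩
    · intro S hS
      simp only [Finset.mem_coe, Finset.mem_filter, Finset.mem_univ, true_and] at hS
      exact Finset.insert_erase hS.1
    · intro T hT
      rw [Finset.mem_coe, Finset.mem_powersetCard] at hT
      have hi0 : i0 ∉ T := fun h => (Finset.mem_erase.mp (hT.1 h)).1 rfl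
      exact Finset.erase_insert hi0
  rw [h1, Finset.card_powersetCard, Finset.card_erase_of_mem (Finset.mem_univ _),
    Finset.card_univ, Fintype.card_fin]

lemma rhs_eval {J : ℕ} (hJ : 1 < J) (bv : ℕ) (ν : ℝ)
    (θ : (Fin J → ℕ) → ℝ)
    (hsym : ∀ (σ : Equiv.Perm (Fin J)) (k : Fin J → ℕ), θ (fun j => k (σ j)) = θ k)
    (i0 : Fin J) (ℓ : ℕ) (hl1 : 1 ≤ ℓ) (hlb : ℓ ≤ bv) :
    ∑ k ∈ (Kfin (fun _ : Fin J => bv)).filter (fun k => k i0 = ℓ - 1),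
        θ k * (ν * routeP (fun _ => bv) k i0)
      = θ (fun _ => ℓ - 1) * (ν / (J : ℝ))
        + ∑ i ∈ Finset.Icc 1 (J - 1),
            (∑ k ∈ (Kfin (fun _ : Fin J => bv)).filter
                (fun k => (∀ j : Fin J, (j : ℕ) < i → k j = ℓ - 1)
                  ∧ ∀ j : Fin J, i ≤ (j : ℕ) → ℓ - 1 < k j ∧ k j ≤ bv), θ k)
              * ((J - 1).choose (i - 1) : ℝ) * (ν / (i : ℝ)) := by
  classical
  set c := ℓ - 1 with hc
  have hcb : c < bv := by omega
  have h1 : ∑ k ∈ (Kfin (fun _ : Fin J => bv)).filter (fun k => k i0 = c),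
        θ k * (ν * routeP (fun _ => bv) k i0)
      = ∑ k ∈ (Kfin (fun _ : Fin J => bv)).filter (fun k => k i0 = c ∧ ∀ j, c ≤ k j),
          θ k * (ν * routeP (fun _ => bv) k i0) := by
    refine (Finset.sum_subset ?_ ?_).symm
    · intro k hk
      have h := Finset.mem_filter.mp hk
      exact Finset.mem_filter.mpr ⟨h.1, h.2.1⟩
    · intro k hk hnk
      have hkK := (Finset.mem_filter.mp hk).1
      have hkc := (Finset.mem_filter.mp hk).2
      have hb' : ∀ j, k j ≤ bv := mem_Kfin.mp hkK
      have hex : ¬ ∀ j, c ≤ k j := fun hall =>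
        hnk (Finset.mem_filter.mpr ⟨hkK, hkc, hall⟩)
      push_neg at hex
      obtain ⟨j, hj⟩ := hex
      have hnm : i0 ∉ Mset (fun _ => bv) k := by
        rw [mem_Mset_iff hb']
        push_neg
        exact ⟨j, by omega⟩
      simp [routeP, hnm]
  have h2 : ∑ k ∈ (Kfin (fun _ : Fin J => bv)).filter (fun k => k i0 = c ∧ ∀ j, c ≤ k j),
        θ k * (ν * routeP (fun _ => bv) k i0)
      = ∑ k ∈ (Kfin (fun _ : Fin J => bv)).filter (fun k => k i0 = c ∧ ∀ j, c ≤ k j),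
          θ k * (ν * (1 / (((univ.filter fun j => k j = c)).card : ℝ))) := by
    refine Finset.sum_congr rfl fun k hk => ?_
    have hkK := (Finset.mem_filter.mp hk).1
    obtain ⟨hkc, hge⟩ := (Finset.mem_filter.mp hk).2
    have hb' : ∀ j, k j ≤ bv := mem_Kfin.mp hkK
    have hmin : ∀ j, k i0 ≤ k j := fun j => by rw [hkc]; exact hge j
    have hM : Mset (fun _ => bv) k = univ.filter (fun j => k j = c) := by
      rw [Mset_eq_min hb' hmin, hkc]
    have hmem : i0 ∈ Mset (fun _ => bv) k := by
      rw [hM]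
      simp [hkc]
    simp only [routeP]
    rw [if_pos hmem, hM]
  have h3 : ∑ k ∈ (Kfin (fun _ : Fin J => bv)).filter (fun k => k i0 = c ∧ ∀ j, c ≤ k j),
        θ k * (ν * (1 / (((univ.filter fun j => k j = c)).card : ℝ)))
      = ∑ S : Finset (Fin J),
          ∑ k ∈ ((Kfin (fun _ : Fin J => bv)).filter
              (fun k => k i0 = c ∧ ∀ j, c ≤ k j)).filter
              (fun k => (univ.filter fun j => k j = c) = S),
            θ k * (ν * (1 / (((univ.filter fun j => k j = c)).card : ℝ))) :=
    (Finset.sum_fiberwise _ _ _).symm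
  have hfib : ∀ S : Finset (Fin J), i0 ∈ S →
      ((Kfin (fun _ : Fin J => bv)).filter (fun k => k i0 = c ∧ ∀ j, c ≤ k j)).filter
          (fun k => (univ.filter fun j => k j = c) = S) = blockSet bv c S := by
    intro S hS
    ext k
    simp only [blockSet, Finset.mem_filter]
    constructor
    · rintro ⟨⟨hkK, hkc, hge⟩, hEq⟩
      refine ⟨hkK, fun j => ⟨fun hj => ?_, fun hj => ?_⟩⟩
      · have hm : j ∈ univ.filter (fun j => k j = c) := by rw [hEq]; exact hj
        simpa using hm
      · have hm : j ∉ univ.filter (fun j => k j = c) := by rw [hEq]; exact hj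
        have hne : ¬ k j = c := by simpa using hm
        have := hge j
        omega
    · rintro ⟨hkK, hall⟩
      refine ⟨⟨hkK, (hall i0).1 hS, fun j => ?_⟩, ?_⟩
      · by_cases hj : j ∈ S
        · exact le_of_eq ((hall j).1 hj).symm
        · have := (hall j).2 hj; omega
      · ext j
        simp only [Finset.mem_filter, Finset.mem_univ, true_and]
        constructor
        · intro hkj
          by_contra hj
          have := (hall j).2 hj
          omega
        · exact (hall j).1
  have h4a : ∀ S ∈ (univ : Finset (Finset (Fin J))).filter (fun S => ¬ i0 ∈ S),
      (∑ k ∈ ((Kfin (fun _ : Fin J => bv)).filter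
            (fun k => k i0 = c ∧ ∀ j, c ≤ k j)).filter
            (fun k => (univ.filter fun j => k j = c) = S),
          θ k * (ν * (1 / (((univ.filter fun j => k j = c)).card : ℝ)))) = 0 := by
    intro S hS
    have hS' : i0 ∉ S := (Finset.mem_filter.mp hS).2
    have hempty : ((Kfin (fun _ : Fin J => bv)).filter
        (fun k => k i0 = c ∧ ∀ j, c ≤ k j)).filter
        (fun k => (univ.filter fun j => k j = c) = S) = ∅ := by
      rw [Finset.filter_eq_empty_iff]
      intro k hk hEq
      have hkc : k i0 = c := ((Finset.mem_filter.mp hk).2).1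
      have : i0 ∈ S := by rw [← hEq]; simp [hkc]
      exact hS' this
    rw [hempty, Finset.sum_empty]
  have h4 : (∑ S : Finset (Fin J),
        ∑ k ∈ ((Kfin (fun _ : Fin J => bv)).filter
            (fun k => k i0 = c ∧ ∀ j, c ≤ k j)).filter
            (fun k => (univ.filter fun j => k j = c) = S),
          θ k * (ν * (1 / (((univ.filter fun j => k j = c)).card : ℝ))))
      = ∑ S ∈ (univ : Finset (Finset (Fin J))).filter (fun S => i0 ∈ S),
          ∑ k ∈ ((Kfin (fun _ : Fin J => bv)).filter
              (fun k => k i0 = c ∧ ∀ j, c ≤ k j)).filter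
              (fun k => (univ.filter fun j => k j = c) = S),
            θ k * (ν * (1 / (((univ.filter fun j => k j = c)).card : ℝ))) := by
    rw [← Finset.sum_filter_add_sum_filter_not (univ : Finset (Finset (Fin J)))
      (fun S => i0 ∈ S), Finset.sum_eq_zero h4a, add_zero]
  have h5 : ∀ S ∈ (univ : Finset (Finset (Fin J))).filter (fun S => i0 ∈ S),
      (∑ k ∈ ((Kfin (fun _ : Fin J => bv)).filter
            (fun k => k i0 = c ∧ ∀ j, c ≤ k j)).filter
            (fun k => (univ.filter fun j => k j = c) = S),
          θ k * (ν * (1 / (((univ.filter fun j => k j = c)).card : ℝ))))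
        = (∑ k ∈ blockSet bv c S, θ k) * (ν * (1 / (S.card : ℝ))) := by
    intro S hS
    have hi0S : i0 ∈ S := (Finset.mem_filter.mp hS).2
    have hval : ∀ k ∈ ((Kfin (fun _ : Fin J => bv)).filter
          (fun k => k i0 = c ∧ ∀ j, c ≤ k j)).filter
          (fun k => (univ.filter fun j => k j = c) = S),
        θ k * (ν * (1 / (((univ.filter fun j => k j = c)).card : ℝ)))
          = θ k * (ν * (1 / (S.card : ℝ))) := by
      intro k hk
      rw [(Finset.mem_filter.mp hk).2]
    rw [Finset.sum_congr rfl hval, ← Finset.sum_mul, hfib S hi0S]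
  have h6 : ∑ S ∈ (univ : Finset (Finset (Fin J))).filter (fun S => i0 ∈ S),
        (∑ k ∈ blockSet bv c S, θ k) * (ν * (1 / (S.card : ℝ)))
      = ∑ i ∈ Finset.Icc 1 J,
          ∑ S ∈ ((univ : Finset (Finset (Fin J))).filter (fun S => i0 ∈ S)).filter
              (fun S => S.card = i),
            (∑ k ∈ blockSet bv c S, θ k) * (ν * (1 / (S.card : ℝ))) := by
    refine (Finset.sum_fiberwise_of_maps_to ?_ _).symm
    intro S hS
    have hi0S : i0 ∈ S := (Finset.mem_filter.mp hS).2
    rw [Finset.mem_Icc]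
    refine ⟨Finset.card_pos.mpr ⟨i0, hi0S⟩, ?_⟩
    calc S.card ≤ (univ : Finset (Fin J)).card := Finset.card_le_univ S
      _ = J := by simp
  have h7 : ∀ i ∈ Finset.Icc 1 J,
      (∑ S ∈ ((univ : Finset (Finset (Fin J))).filter (fun S => i0 ∈ S)).filter
          (fun S => S.card = i),
        (∑ k ∈ blockSet bv c S, θ k) * (ν * (1 / (S.card : ℝ))))
      = ((J - 1).choose (i - 1) : ℝ) *
          ((∑ k ∈ blockSet bv c (univ.filter (fun j : Fin J => (j : ℕ) < i)), θ k)
            * (ν * (1 / (i : ℝ)))) := by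
    intro i hi
    rw [Finset.mem_Icc] at hi
    have hS0card : (univ.filter (fun j : Fin J => (j : ℕ) < i)).card = i :=
      card_filter_lt hi.2
    have hval : ∀ S ∈ ((univ : Finset (Finset (Fin J))).filter (fun S => i0 ∈ S)).filter
        (fun S => S.card = i),
        (∑ k ∈ blockSet bv c S, θ k) * (ν * (1 / (S.card : ℝ)))
          = (∑ k ∈ blockSet bv c (univ.filter (fun j : Fin J => (j : ℕ) < i)), θ k)
              * (ν * (1 / (i : ℝ))) := by
      intro S hS
      have hcard : S.card = i := (Finset.mem_filter.mp hS).2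
      rw [blockSum_eq (S := S) (T := univ.filter (fun j : Fin J => (j : ℕ) < i)) bv c θ hsym (by rw [hcard, hS0card]), hcard]
    rw [Finset.sum_congr rfl hval, Finset.sum_const, nsmul_eq_mul, card_sets i0 hi.1]
  have hsplit : ∀ f : ℕ → ℝ,
      ∑ i ∈ Finset.Icc 1 J, f i = (∑ i ∈ Finset.Icc 1 (J - 1), f i) + f J := by
    intro f
    have h := Finset.sum_Icc_succ_top (a := 1) (b := J - 1) (by omega) f
    have hJ' : J - 1 + 1 = J := by omega
    rw [hJ'] at h
    exact h
  have htop : ((J - 1).choose (J - 1) : ℝ) *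
      ((∑ k ∈ blockSet bv c (univ.filter (fun j : Fin J => (j : ℕ) < J)), θ k)
        * (ν * (1 / (J : ℝ)))) = θ (fun _ => c) * (ν / (J : ℝ)) := by
    have huniv : (univ.filter (fun j : Fin J => (j : ℕ) < J)) = univ := by
      apply Finset.filter_true_of_mem
      intro j _
      exact j.is_lt
    have hblock : blockSet bv c (univ : Finset (Fin J)) = {fun _ => c} := by
      ext k
      simp only [blockSet, Finset.mem_filter, Finset.mem_singleton]
      constructor
      · rintro ⟨hkK, hall⟩
        exact funext fun j => (hall j).1 (Finset.mem_univ j)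
      · rintro rfl
        refine ⟨mem_Kfin.mpr fun j => by omega, fun j => ⟨fun _ => rfl, ?_⟩⟩
        intro hj
        exact absurd (Finset.mem_univ j) hj
    rw [huniv, hblock, Finset.sum_singleton, Nat.choose_self]
    push_cast
    ring
  have hterm : ∀ i ∈ Finset.Icc 1 (J - 1),
      ((J - 1).choose (i - 1) : ℝ) *
        ((∑ k ∈ blockSet bv c (univ.filter (fun j : Fin J => (j : ℕ) < i)), θ k)
          * (ν * (1 / (i : ℝ))))
      = (∑ k ∈ (Kfin (fun _ : Fin J => bv)).filter
            (fun k => (∀ j : Fin J, (j : ℕ) < i → k j = c)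
              ∧ ∀ j : Fin J, i ≤ (j : ℕ) → c < k j ∧ k j ≤ bv), θ k)
          * ((J - 1).choose (i - 1) : ℝ) * (ν / (i : ℝ)) := by
    intro i hi
    have hset : blockSet bv c (univ.filter (fun j : Fin J => (j : ℕ) < i))
        = (Kfin (fun _ : Fin J => bv)).filter
            (fun k => (∀ j : Fin J, (j : ℕ) < i → k j = c)
              ∧ ∀ j : Fin J, i ≤ (j : ℕ) → c < k j ∧ k j ≤ bv) := by
      ext k
      simp only [blockSet, Finset.mem_filter]
      constructor
      · rintro ⟨hkK, hall⟩
        have hb' := mem_Kfin.mp hkK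
        refine ⟨hkK, fun j hj => (hall j).1 (by simp [hj]),
          fun j hj => ⟨(hall j).2 (by simp; omega), hb' j⟩⟩
      · rintro ⟨hkK, ha, hb⟩
        refine ⟨hkK, fun j => ⟨fun hj => ha j (by simpa using hj), fun hj => ?_⟩⟩
        refine (hb j ?_).1
        simp only [Finset.mem_filter, Finset.mem_univ, true_and] at hj
        omega
    rw [hset]
    ring
  rw [h1, h2, h3, h4, Finset.sum_congr rfl h5, h6, Finset.sum_congr rfl h7, hsplit,
    htop, Finset.sum_congr rfl hterm, add_comm]


/-- marginal balance for the inventory at location 1 in the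
homogeneous case. -/
theorem homogeneous_marginal_inventory_balance
    (J : ℕ) (hJ : 1 < J) (lamv : ℝ) (hlam : 0 < lamv)
    (bv : ℕ) (hb : 1 ≤ bv) (ν : ℝ) (hν : 0 < ν)
    (θ : (Fin J → ℕ) → ℝ)
    (hθnn : ∀ k : Fin J → ℕ, (∀ j, k j ≤ bv) → 0 ≤ θ k)
    (hbal : ReducedBalance (fun _ => lamv) (fun _ => bv) ν θ)
    (hmass : ∑ k ∈ Kfin (fun _ : Fin J => bv), θ k = 1)
    (hsym : ∀ (σ : Equiv.Perm (Fin J)) (k : Fin J → ℕ),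
      θ (fun j => k (σ j)) = θ k) :
    ∀ ℓ : ℕ, 1 ≤ ℓ → ℓ ≤ bv →
      (∑ k ∈ (Kfin (fun _ : Fin J => bv)).filter
          (fun k => k ⟨0, by omega⟩ = ℓ), θ k) * lamv
        = θ (fun _ => ℓ - 1) * (ν / (J : ℝ))
          + ∑ i ∈ Finset.Icc 1 (J - 1),
              (∑ k ∈ (Kfin (fun _ : Fin J => bv)).filter
                  (fun k => (∀ j : Fin J, (j : ℕ) < i → k j = ℓ - 1)
                    ∧ ∀ j : Fin J, i ≤ (j : ℕ) → ℓ - 1 < k j ∧ k j ≤ bv), θ k)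
                * ((J - 1).choose (i - 1) : ℝ) * (ν / (i : ℝ)) := by
  intro ℓ hl1 hlb
  have hcut := cut_lemma lamv bv ν θ hbal ⟨0, by omega⟩ ℓ hl1 hlb
  have hrhs := rhs_eval hJ bv ν θ hsym ⟨0, by omega⟩ ℓ hl1 hlb
  rw [Finset.sum_mul]
  exact hcut.trans hrhs
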